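/- Let C be a CSS code with K ≥ 1 and let C̃ be obtained from C by the full X-type generator splitting procedure. Then the Z-distance does not decrease: d̃_Z ≥ d_Z. -/

import Mathlib

open Matrix

/-- The weight of a vector over `F₂`: the number of nonzero entries. -/
def wt {α : Type*} [Fintype α] (v : α → ZMod 2) : ℕ :=
  (Finset.univ.filter fun j => v j ≠ 0).card

/-- Maximum weight of a row of a matrix over `F₂`. -/
def maxRowW {m α : Type*} [Fintype m] [Fintype α] (M : Matrix m α (ZMod 2)) : ℕ :=
  Finset.univ.sup fun i => wt (M i)

/-- Maximum weight of a column of a matrix over `F₂`. -/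
def maxColW {m α : Type*} [Fintype m] [Fintype α] (M : Matrix m α (ZMod 2)) : ℕ :=
  Finset.univ.sup fun j => wt fun i => M i j

/-- Total number of nonzero entries of a matrix over `F₂`. -/
def totW {m α : Type*} [Fintype m] [Fintype α] (M : Matrix m α (ZMod 2)) : ℕ :=
  ∑ i, wt (M i)

variable {N nX nZ : ℕ}

/-- Qubits of the code obtained by the full X-type generator splitting procedure:
the original `N` qubits, plus, for each row of `HX` of weight `w ≥ 4` (a "heavy" row),
cut qubits `(1),…,(w−3)` (0-indexed below). -/
abbrev SplitQ (HX : Matrix (Fin nX) (Fin N) (ZMod 2)) : Type :=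
  Fin N ⊕ Σ i : {i : Fin nX // 4 ≤ wt (HX i)}, Fin (wt (HX i.1) - 3)

/-- X-type generators of the fully split code: the rows of `HX` of weight `≤ 3`,
plus, for each heavy row, the `w−2` rows created by splitting it. -/
abbrev SplitXIdx (HX : Matrix (Fin nX) (Fin N) (ZMod 2)) : Type :=
  {i : Fin nX // ¬ 4 ≤ wt (HX i)} ⊕ Σ i : {i : Fin nX // 4 ≤ wt (HX i)}, Fin (wt (HX i.1) - 2)

/-- X-type generator matrix of the code `C̃` obtained from `C` by applying the X-type
generator splitting step once to each row of `HX` of weight at least 4 (the result is the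
same in any order).  Here `q i` enumerates, in a fixed order, the support of the heavy
row `i`.  Splitting a heavy row with support `{q₁,…,q_w}` produces `w−2` rows with
supports `{q₁,q₂,(1)}`, `{(m),q_{m+2},(m+1)}` for `m = 1,…,w−4`, and `{(w−3),q_{w−1},q_w}`,
on the original qubits together with that row's own cut qubits. -/
def splitHX (HX : Matrix (Fin nX) (Fin N) (ZMod 2))
    (q : ∀ i : {i : Fin nX // 4 ≤ wt (HX i)}, Fin (wt (HX i.1)) → Fin N) :
    Matrix (SplitXIdx HX) (SplitQ HX) (ZMod 2) := fun r j =>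
  match r, j with
  | Sum.inl i, Sum.inl p => HX i.1 p
  | Sum.inl _, Sum.inr _ => 0
  | Sum.inr ⟨i, r⟩, Sum.inl p =>
      have hw : 4 ≤ wt (HX i.1) := i.2
      if (r.val = 0 ∧ (p = q i ⟨0, by omega⟩ ∨ p = q i ⟨1, by omega⟩)) ∨
         (1 ≤ r.val ∧ r.val ≤ wt (HX i.1) - 4 ∧
           p = q i ⟨r.val + 1, by have := r.isLt; omega⟩) ∨
         (r.val = wt (HX i.1) - 3 ∧
           (p = q i ⟨wt (HX i.1) - 2, by omega⟩ ∨ p = q i ⟨wt (HX i.1) - 1, by omega⟩))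
      then 1 else 0
  | Sum.inr ⟨i, r⟩, Sum.inr ⟨i', c⟩ =>
      if i' = i ∧ (c.val = r.val ∨ c.val + 1 = r.val) then 1 else 0

/-- Z-type generator matrix of the code `C̃` obtained from `C` by the full X-type generator
splitting procedure: each row `R` of `HZ` agrees with `R` on the original qubits, and its
entry at the cut qubit `(m)` of heavy row `i` is the parity of
`|supp(R) ∩ {q_{i,1},…,q_{i,m+1}}|`. -/
def splitHZ (HX : Matrix (Fin nX) (Fin N) (ZMod 2)) (HZ : Matrix (Fin nZ) (Fin N) (ZMod 2))
    (q : ∀ i : {i : Fin nX // 4 ≤ wt (HX i)}, Fin (wt (HX i.1)) → Fin N) :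
    Matrix (Fin nZ) (SplitQ HX) (ZMod 2) := fun R j =>
  match j with
  | Sum.inl p => HZ R p
  | Sum.inr ⟨i, m⟩ => ∑ a : Fin (wt (HX i.1)), if a.val ≤ m.val + 1 then HZ R (q i a) else 0

/-- `distX HX HZ` is the X-distance of the CSS code with generator matrices `HX`, `HZ`:
the minimum weight of a vector in `ker(HZ)` not lying in the row space of `HX`. -/
noncomputable def distX {mX mZ α : Type*} [Fintype mX] [Fintype mZ] [Fintype α]
    (HX : Matrix mX α (ZMod 2)) (HZ : Matrix mZ α (ZMod 2)) : ℕ :=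
  sInf {k | ∃ v : α → ZMod 2, HZ.mulVec v = 0 ∧
    v ∉ Submodule.span (ZMod 2) (Set.range HX) ∧ wt v = k}

/-- `distZ HX HZ` is the Z-distance of the CSS code with generator matrices `HX`, `HZ`:
the minimum weight of a vector in `ker(HX)` not lying in the row space of `HZ`. -/
noncomputable def distZ {mX mZ α : Type*} [Fintype mX] [Fintype mZ] [Fintype α]
    (HX : Matrix mX α (ZMod 2)) (HZ : Matrix mZ α (ZMod 2)) : ℕ :=
  sInf {k | ∃ v : α → ZMod 2, HX.mulVec v = 0 ∧
    v ∉ Submodule.span (ZMod 2) (Set.range HZ) ∧ wt v = k}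

section Aux

lemma z2_add_self : ∀ x : ZMod 2, x + x = 0 := by decide
lemma z2_cancel : ∀ a b x : ZMod 2, a + b + x = 0 → x = a + b := by decide
lemma z2_one_of_ne : ∀ x : ZMod 2, x ≠ 0 → x = 1 := by decide

lemma sum_ite_or {α : Type*} [Fintype α] [DecidableEq α] {a b : α} (hab : a ≠ b)
    (f : α → ZMod 2) :
    (∑ x, if x = a ∨ x = b then f x else 0) = f a + f b := by
  have h : ∀ x, (if x = a ∨ x = b then f x else 0)
      = (if x = a then f x else 0) + (if x = b then f x else 0) := by
    intro x
    by_cases h1 : x = a <;> by_cases h2 : x = b <;> simp_all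
  simp [h, Finset.sum_add_distrib, Finset.sum_ite_eq']

variable {N nX nZ : ℕ} (HX : Matrix (Fin nX) (Fin N) (ZMod 2))
  (q : ∀ i : {i : Fin nX // 4 ≤ wt (HX i)}, Fin (wt (HX i.1)) → Fin N)

/-- Value assigned to cut qubit `(m)` of heavy row `i` by the parity formula. -/
def cutval (v : Fin N → ZMod 2) (i : {i : Fin nX // 4 ≤ wt (HX i)}) (m : ℕ) : ZMod 2 :=
  ∑ a : Fin (wt (HX i.1)), if a.val ≤ m + 1 then v (q i a) else 0

lemma dot_r0 (hinj : ∀ i, Function.Injective (q i)) (u : SplitQ HX → ZMod 2)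
    (i : {i : Fin nX // 4 ≤ wt (HX i)}) (r : Fin (wt (HX i.1) - 2)) (hr : r.val = 0) :
    (splitHX HX q).mulVec u (Sum.inr ⟨i, r⟩)
      = u (Sum.inl (q i ⟨0, by have := i.2; omega⟩))
        + u (Sum.inl (q i ⟨1, by have := i.2; omega⟩))
        + u (Sum.inr ⟨i, ⟨0, by have := i.2; omega⟩⟩) := by
  have hw : 4 ≤ wt (HX i.1) := i.2
  show (∑ j, splitHX HX q (Sum.inr ⟨i, r⟩) j * u j) = _
  rw [Fintype.sum_sum_type]
  have hA : ¬ (1 ≤ r.val) := by omega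
  have hB : ¬ ((0:ℕ) = wt (HX i.1) - 3) := by omega
  have h1 : ∀ p : Fin N, splitHX HX q (Sum.inr ⟨i, r⟩) (Sum.inl p) * u (Sum.inl p)
      = if p = q i ⟨0, by omega⟩ ∨ p = q i ⟨1, by omega⟩ then u (Sum.inl p) else 0 := by
    intro p
    simp only [splitHX, ite_mul, one_mul, zero_mul]
    exact if_congr (by simp [hr, hA, hB]) rfl rfl
  have h2 : ∀ j : (Σ i' : {i : Fin nX // 4 ≤ wt (HX i)}, Fin (wt (HX i'.1) - 3)),
      splitHX HX q (Sum.inr ⟨i, r⟩) (Sum.inr j) * u (Sum.inr j)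
      = if j = ⟨i, ⟨0, by omega⟩⟩ then u (Sum.inr j) else 0 := by
    rintro ⟨i', c⟩
    simp only [splitHX, ite_mul, one_mul, zero_mul]
    refine if_congr ?_ rfl rfl
    constructor
    · rintro ⟨rfl, hc⟩
      have hcv : c.val = 0 := by omega
      have hc0 : c = ⟨0, by omega⟩ := Fin.ext (by simpa using hcv)
      rw [hc0]
    · intro h
      have e1 : i' = i := congrArg Sigma.fst h
      have e2 : c.val = 0 := congrArg
        (fun j : (Σ i'' : {i : Fin nX // 4 ≤ wt (HX i)}, Fin (wt (HX i''.1) - 3)) => j.2.val) h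
      exact ⟨e1, Or.inl (by omega)⟩
  rw [Finset.sum_congr rfl fun p _ => h1 p, Finset.sum_congr rfl fun j _ => h2 j,
    sum_ite_or (fun h => by simpa [Fin.ext_iff] using hinj i h) _, Finset.sum_ite_eq']
  simp

lemma dot_mid (hinj : ∀ i, Function.Injective (q i)) (u : SplitQ HX → ZMod 2)
    (i : {i : Fin nX // 4 ≤ wt (HX i)}) (r : Fin (wt (HX i.1) - 2))
    (h1le : 1 ≤ r.val) (hrle : r.val ≤ wt (HX i.1) - 4) :
    (splitHX HX q).mulVec u (Sum.inr ⟨i, r⟩)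
      = u (Sum.inr ⟨i, ⟨r.val - 1, by have := i.2; omega⟩⟩)
        + u (Sum.inl (q i ⟨r.val + 1, by have := i.2; omega⟩))
        + u (Sum.inr ⟨i, ⟨r.val, by have := i.2; omega⟩⟩) := by
  have hw : 4 ≤ wt (HX i.1) := i.2
  show (∑ j, splitHX HX q (Sum.inr ⟨i, r⟩) j * u j) = _
  rw [Fintype.sum_sum_type]
  have hA : ¬ (r.val = 0) := by omega
  have hB : ¬ (r.val = wt (HX i.1) - 3) := by omega
  have h1 : ∀ p : Fin N, splitHX HX q (Sum.inr ⟨i, r⟩) (Sum.inl p) * u (Sum.inl p)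
      = if p = q i ⟨r.val + 1, by omega⟩ then u (Sum.inl p) else 0 := by
    intro p
    simp only [splitHX, ite_mul, one_mul, zero_mul]
    exact if_congr (by simp [hA, hB, h1le, hrle]) rfl rfl
  have h2 : ∀ j : (Σ i' : {i : Fin nX // 4 ≤ wt (HX i)}, Fin (wt (HX i'.1) - 3)),
      splitHX HX q (Sum.inr ⟨i, r⟩) (Sum.inr j) * u (Sum.inr j)
      = if j = ⟨i, ⟨r.val, by omega⟩⟩ ∨ j = ⟨i, ⟨r.val - 1, by omega⟩⟩
        then u (Sum.inr j) else 0 := by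
    rintro ⟨i', c⟩
    simp only [splitHX, ite_mul, one_mul, zero_mul]
    refine if_congr ?_ rfl rfl
    constructor
    · rintro ⟨rfl, hc | hc⟩
      · exact Or.inl (by rw [Fin.ext (show c.val = (⟨r.val, by omega⟩ : Fin _).val by simpa using hc)])
      · exact Or.inr (by rw [Fin.ext (show c.val = (⟨r.val - 1, by omega⟩ : Fin _).val by simp; omega)])
    · intro h
      rcases h with h | h
      · have e1 : i' = i := congrArg Sigma.fst h
        have e2 : c.val = r.val := by
          have := congrArg
            (fun j : (Σ i'' : {i : Fin nX // 4 ≤ wt (HX i)}, Fin (wt (HX i''.1) - 3)) => j.2.val) h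
          simpa using this
        exact ⟨e1, Or.inl e2⟩
      · have e1 : i' = i := congrArg Sigma.fst h
        have e2 : c.val = r.val - 1 := by
          have := congrArg
            (fun j : (Σ i'' : {i : Fin nX // 4 ≤ wt (HX i)}, Fin (wt (HX i''.1) - 3)) => j.2.val) h
          simpa using this
        exact ⟨e1, Or.inr (by omega)⟩
  rw [Finset.sum_congr rfl fun p _ => h1 p, Finset.sum_congr rfl fun j _ => h2 j,
    Finset.sum_ite_eq', sum_ite_or ?_ _]
  · simp; ring
  · intro h
    have := congrArg
      (fun j : (Σ i'' : {i : Fin nX // 4 ≤ wt (HX i)}, Fin (wt (HX i''.1) - 3)) => j.2.val) h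
    simp at this
    omega

lemma dot_last (hinj : ∀ i, Function.Injective (q i)) (u : SplitQ HX → ZMod 2)
    (i : {i : Fin nX // 4 ≤ wt (HX i)}) (r : Fin (wt (HX i.1) - 2))
    (hr : r.val = wt (HX i.1) - 3) :
    (splitHX HX q).mulVec u (Sum.inr ⟨i, r⟩)
      = u (Sum.inr ⟨i, ⟨wt (HX i.1) - 4, by have := i.2; omega⟩⟩)
        + u (Sum.inl (q i ⟨wt (HX i.1) - 2, by have := i.2; omega⟩))
        + u (Sum.inl (q i ⟨wt (HX i.1) - 1, by have := i.2; omega⟩)) := by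
  have hw : 4 ≤ wt (HX i.1) := i.2
  show (∑ j, splitHX HX q (Sum.inr ⟨i, r⟩) j * u j) = _
  rw [Fintype.sum_sum_type]
  have hA : ¬ (r.val = 0) := by omega
  have hB : ¬ (r.val ≤ wt (HX i.1) - 4) := by omega
  have h1 : ∀ p : Fin N, splitHX HX q (Sum.inr ⟨i, r⟩) (Sum.inl p) * u (Sum.inl p)
      = if p = q i ⟨wt (HX i.1) - 2, by omega⟩ ∨ p = q i ⟨wt (HX i.1) - 1, by omega⟩
        then u (Sum.inl p) else 0 := by
    intro p
    simp only [splitHX, ite_mul, one_mul, zero_mul]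
    exact if_congr (by
      simp [hr, show ¬(wt (HX i.1) - 3 = 0) from by omega,
        show ¬(wt (HX i.1) ≤ wt (HX i.1) - 4 + 3) from by omega,
        show ¬(wt (HX i.1) - 3 ≤ wt (HX i.1) - 4) from by omega]) rfl rfl
  have h2 : ∀ j : (Σ i' : {i : Fin nX // 4 ≤ wt (HX i)}, Fin (wt (HX i'.1) - 3)),
      splitHX HX q (Sum.inr ⟨i, r⟩) (Sum.inr j) * u (Sum.inr j)
      = if j = ⟨i, ⟨wt (HX i.1) - 4, by omega⟩⟩ then u (Sum.inr j) else 0 := by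
    rintro ⟨i', c⟩
    simp only [splitHX, ite_mul, one_mul, zero_mul]
    refine if_congr ?_ rfl rfl
    constructor
    · rintro ⟨rfl, hc | hc⟩
      · exact absurd hc (by have := c.isLt; omega)
      · rw [Fin.ext (show c.val = (⟨wt (HX i'.1) - 4, by omega⟩ : Fin _).val by simp; omega)]
    · intro h
      have e1 : i' = i := congrArg Sigma.fst h
      have e2 : c.val = wt (HX i.1) - 4 := by
        have := congrArg
          (fun j : (Σ i'' : {i : Fin nX // 4 ≤ wt (HX i)}, Fin (wt (HX i''.1) - 3)) => j.2.val) h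
        simpa using this
      exact ⟨e1, Or.inr (by omega)⟩
  rw [Finset.sum_congr rfl fun p _ => h1 p, Finset.sum_congr rfl fun j _ => h2 j,
    sum_ite_or (fun h => by have := hinj i h; simp [Fin.ext_iff] at this; omega) _,
    Finset.sum_ite_eq']
  simp; ring

lemma dot_light (u : SplitQ HX → ZMod 2) (i : {i : Fin nX // ¬ 4 ≤ wt (HX i)}) :
    (splitHX HX q).mulVec u (Sum.inl i) = ∑ p, HX i.1 p * u (Sum.inl p) := by
  show (∑ j, splitHX HX q (Sum.inl i) j * u j) = _
  rw [Fintype.sum_sum_type]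
  simp [splitHX]

lemma cutval_zero (v : Fin N → ZMod 2) (i : {i : Fin nX // 4 ≤ wt (HX i)}) :
    cutval HX q v i 0
      = v (q i ⟨0, by have := i.2; omega⟩) + v (q i ⟨1, by have := i.2; omega⟩) := by
  have hw : 4 ≤ wt (HX i.1) := i.2
  rw [cutval, Finset.sum_congr rfl fun a _ =>
    if_congr (show a.val ≤ 0 + 1 ↔ a = ⟨0, by omega⟩ ∨ a = ⟨1, by omega⟩ by
      simp [Fin.ext_iff]; omega) rfl rfl]
  exact sum_ite_or (by simp [Fin.ext_iff]) _

lemma cutval_succ (v : Fin N → ZMod 2) (i : {i : Fin nX // 4 ≤ wt (HX i)}) (m : ℕ)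
    (hm : m + 2 < wt (HX i.1)) :
    cutval HX q v i (m + 1) = cutval HX q v i m + v (q i ⟨m + 2, hm⟩) := by
  have h : ∀ a : Fin (wt (HX i.1)), (if a.val ≤ (m + 1) + 1 then v (q i a) else 0)
      = (if a.val ≤ m + 1 then v (q i a) else 0)
        + (if a = ⟨m + 2, hm⟩ then v (q i a) else 0) := by
    intro a
    split_ifs <;> simp_all [Fin.ext_iff] <;> omega
  rw [cutval, Finset.sum_congr rfl fun a _ => h a, Finset.sum_add_distrib,
    Finset.sum_ite_eq']
  simp [cutval]

lemma cutval_last (v : Fin N → ZMod 2) (i : {i : Fin nX // 4 ≤ wt (HX i)}) :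
    cutval HX q v i (wt (HX i.1) - 4)
        + v (q i ⟨wt (HX i.1) - 2, by have := i.2; omega⟩)
        + v (q i ⟨wt (HX i.1) - 1, by have := i.2; omega⟩)
      = ∑ a, v (q i a) := by
  have hw : 4 ≤ wt (HX i.1) := i.2
  have h : ∀ a : Fin (wt (HX i.1)), v (q i a)
      = (if a.val ≤ (wt (HX i.1) - 4) + 1 then v (q i a) else 0)
        + (if a = ⟨wt (HX i.1) - 2, by omega⟩ ∨ a = ⟨wt (HX i.1) - 1, by omega⟩
            then v (q i a) else 0) := by
    intro a
    have := a.isLt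
    split_ifs <;> simp_all [Fin.ext_iff] <;> omega
  rw [Finset.sum_congr rfl fun a _ => h a, Finset.sum_add_distrib,
    sum_ite_or (by simp [Fin.ext_iff]; omega) _, cutval]
  ring

lemma supp_sum (hinj : ∀ i, Function.Injective (q i))
    (hrange : ∀ i p, HX i.1 p ≠ 0 ↔ p ∈ Set.range (q i))
    (i : {i : Fin nX // 4 ≤ wt (HX i)}) (v : Fin N → ZMod 2) :
    ∑ p, HX i.1 p * v p = ∑ a, v (q i a) := by
  have h : ∀ p : Fin N, HX i.1 p * v p
      = if p ∈ Finset.image (q i) Finset.univ then v p else 0 := by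
    intro p
    by_cases hp : HX i.1 p = 0
    · rw [hp, zero_mul, if_neg]
      intro hm
      rw [Finset.mem_image] at hm
      obtain ⟨a, _, ha⟩ := hm
      exact (hrange i p).mpr ⟨a, ha⟩ hp
    · rw [z2_one_of_ne _ hp, one_mul, if_pos]
      rw [Finset.mem_image]
      obtain ⟨a, ha⟩ := (hrange i p).mp hp
      exact ⟨a, Finset.mem_univ a, ha⟩
  rw [Finset.sum_congr rfl fun p _ => h p, Finset.sum_ite_mem, Finset.univ_inter,
    Finset.sum_image fun x _ y _ hxy => hinj i hxy]

/-- The extension of a vector to the split qubits by the parity formula. -/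
def extv (v : Fin N → ZMod 2) : SplitQ HX → ZMod 2 :=
  Sum.elim v fun j => cutval HX q v j.1 j.2.val

lemma extv_ker (hinj : ∀ i, Function.Injective (q i))
    (hrange : ∀ i p, HX i.1 p ≠ 0 ↔ p ∈ Set.range (q i))
    (v : Fin N → ZMod 2) (hv : HX.mulVec v = 0) :
    (splitHX HX q).mulVec (extv HX q v) = 0 := by
  funext x
  rcases x with i | ⟨i, r⟩
  · rw [dot_light]
    show ∑ p, HX i.1 p * v p = 0
    exact congrFun hv i.1
  · have hw : 4 ≤ wt (HX i.1) := i.2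
    by_cases hr0 : r.val = 0
    · rw [dot_r0 HX q hinj _ i r hr0]
      show v _ + v _ + cutval HX q v i (0:ℕ) = (0 : ZMod 2)
      rw [cutval_zero]
      exact z2_add_self _
    · by_cases hrl : r.val = wt (HX i.1) - 3
      · rw [dot_last HX q hinj _ i r hrl]
        show cutval HX q v i (wt (HX i.1) - 4) + v _ + v _ = (0 : ZMod 2)
        rw [cutval_last HX q v i]
        rw [← supp_sum HX q hinj hrange i v]
        exact congrFun hv i.1
      · have h1 : 1 ≤ r.val := by omega
        have h2 : r.val ≤ wt (HX i.1) - 4 := by have := r.isLt; omega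
        rw [dot_mid HX q hinj _ i r h1 h2]
        obtain ⟨m, hm⟩ : ∃ m, r.val = m + 1 := ⟨r.val - 1, by omega⟩
        have hmw : m + 2 < wt (HX i.1) := by have := r.isLt; omega
        have e1 : cutval HX q v i (m + 1) = cutval HX q v i m + v (q i ⟨m + 2, hmw⟩) :=
          cutval_succ HX q v i m hmw
        have e2 : (⟨r.val + 1, by have := r.isLt; omega⟩ : Fin (wt (HX i.1))) = ⟨m + 2, hmw⟩ :=
          Fin.ext (by simp; omega)
        show cutval HX q v i (r.val - 1) + v (q i ⟨r.val + 1, by have := r.isLt; omega⟩)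
            + cutval HX q v i r.val = (0 : ZMod 2)
        rw [e2, show r.val - 1 = m from by omega, show r.val = m + 1 from hm, e1]
        exact z2_add_self _

lemma cut_determined (hinj : ∀ i, Function.Injective (q i)) (u : SplitQ HX → ZMod 2)
    (hker : (splitHX HX q).mulVec u = 0) (i : {i : Fin nX // 4 ≤ wt (HX i)}) :
    ∀ mv (h : mv < wt (HX i.1) - 3),
      u (Sum.inr ⟨i, ⟨mv, h⟩⟩) = cutval HX q (fun p => u (Sum.inl p)) i mv := by
  have hw : 4 ≤ wt (HX i.1) := i.2
  intro mv
  induction mv with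
  | zero =>
    intro h
    have h0 := congrFun hker (Sum.inr ⟨i, ⟨0, by omega⟩⟩)
    rw [dot_r0 HX q hinj u i ⟨0, by omega⟩ rfl] at h0
    rw [cutval_zero]
    exact z2_cancel _ _ _ h0
  | succ m ih =>
    intro h
    have hrow := congrFun hker (Sum.inr ⟨i, ⟨m + 1, by omega⟩⟩)
    rw [dot_mid HX q hinj u i ⟨m + 1, by omega⟩ (by simp) (by simp; omega)] at hrow
    have hrow' : u (Sum.inr ⟨i, ⟨m, by omega⟩⟩) + u (Sum.inl (q i ⟨m + 2, by omega⟩))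
        + u (Sum.inr ⟨i, ⟨m + 1, h⟩⟩) = 0 := hrow
    rw [ih (by omega)] at hrow'
    rw [cutval_succ HX q _ i m (by omega)]
    exact z2_cancel _ _ _ hrow'

lemma restrict_ker (hinj : ∀ i, Function.Injective (q i))
    (hrange : ∀ i p, HX i.1 p ≠ 0 ↔ p ∈ Set.range (q i))
    (u : SplitQ HX → ZMod 2) (hker : (splitHX HX q).mulVec u = 0) :
    HX.mulVec (fun p => u (Sum.inl p)) = 0 := by
  funext i0
  by_cases hb : 4 ≤ wt (HX i0)
  · set i : {i : Fin nX // 4 ≤ wt (HX i)} := ⟨i0, hb⟩ with hi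
    have hw : 4 ≤ wt (HX i.1) := hb
    have hrow := congrFun hker (Sum.inr ⟨i, ⟨wt (HX i.1) - 3, by omega⟩⟩)
    rw [dot_last HX q hinj u i ⟨wt (HX i.1) - 3, by omega⟩ rfl] at hrow
    have hcut := cut_determined HX q hinj u hker i (wt (HX i.1) - 4) (by omega)
    have hrow' : u (Sum.inr ⟨i, ⟨wt (HX i.1) - 4, by omega⟩⟩)
        + u (Sum.inl (q i ⟨wt (HX i.1) - 2, by omega⟩))
        + u (Sum.inl (q i ⟨wt (HX i.1) - 1, by omega⟩)) = 0 := hrow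
    rw [hcut] at hrow'
    show ∑ p, HX i.1 p * u (Sum.inl p) = 0
    rw [supp_sum HX q hinj hrange i, ← cutval_last HX q (fun p => u (Sum.inl p)) i]
    exact hrow'
  · have hrow := congrFun hker (Sum.inl ⟨i0, hb⟩)
    rw [dot_light] at hrow
    exact hrow

lemma span_restrict (HZ : Matrix (Fin nZ) (Fin N) (ZMod 2)) (u : SplitQ HX → ZMod 2)
    (h : u ∈ Submodule.span (ZMod 2) (Set.range (splitHZ HX HZ q))) :
    (fun p => u (Sum.inl p)) ∈ Submodule.span (ZMod 2) (Set.range HZ) := by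
  have h := (Submodule.mem_span_range_iff_exists_fun (ZMod 2)).mp h
  refine (Submodule.mem_span_range_iff_exists_fun (ZMod 2)).mpr ?_
  obtain ⟨c, hc⟩ := h
  refine ⟨c, ?_⟩
  funext p
  have := congrFun hc (Sum.inl p)
  simpa [Finset.sum_apply, splitHZ] using this

lemma span_extend (HZ : Matrix (Fin nZ) (Fin N) (ZMod 2)) (v : Fin N → ZMod 2)
    (h : v ∈ Submodule.span (ZMod 2) (Set.range HZ)) :
    extv HX q v ∈ Submodule.span (ZMod 2) (Set.range (splitHZ HX HZ q)) := by
  have h := (Submodule.mem_span_range_iff_exists_fun (ZMod 2)).mp h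
  refine (Submodule.mem_span_range_iff_exists_fun (ZMod 2)).mpr ?_
  obtain ⟨c, hc⟩ := h
  have hv : ∀ p, v p = ∑ R, c R * HZ R p := by
    intro p
    have := congrFun hc p
    simp only [Finset.sum_apply, Pi.smul_apply, smul_eq_mul] at this
    exact this.symm
  refine ⟨c, ?_⟩
  funext x
  rcases x with p | ⟨i, m⟩
  · simpa [Finset.sum_apply, splitHZ, extv] using congrFun hc p
  · show (∑ R, c R • splitHZ HX HZ q R) (Sum.inr ⟨i, m⟩) = cutval HX q v i m.val
    simp only [Finset.sum_apply, Pi.smul_apply, splitHZ, cutval, smul_eq_mul,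
      Finset.mul_sum, mul_ite, mul_zero]
    rw [Finset.sum_comm]
    apply Finset.sum_congr rfl
    intro a _
    by_cases hcond : a.val ≤ m.val + 1
    · simp [hcond, hv (q i a)]
    · simp [hcond]

lemma wt_restrict (u : SplitQ HX → ZMod 2) : wt (fun p => u (Sum.inl p)) ≤ wt u := by
  apply Finset.card_le_card_of_injOn Sum.inl
  · intro p hp
    simp only [Finset.mem_coe, Finset.mem_filter, Finset.mem_univ, true_and] at hp ⊢
    exact hp
  · intro a _ b _ hab
    exact Sum.inl.inj hab

lemma exists_logical (HZ : Matrix (Fin nZ) (Fin N) (ZMod 2))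
    (hK : 1 ≤ N - HX.rank - HZ.rank) :
    ∃ v : Fin N → ZMod 2, HX.mulVec v = 0 ∧
      v ∉ Submodule.span (ZMod 2) (Set.range HZ) := by
  by_contra hcon
  push_neg at hcon
  have hle : LinearMap.ker HX.mulVecLin ≤ LinearMap.range (HZ.transpose).mulVecLin := by
    rw [Matrix.range_mulVecLin, Matrix.col, Matrix.transpose_transpose]
    intro v hv
    exact hcon v (by simpa [Matrix.mulVecLin_apply] using hv)
  have h1 := LinearMap.finrank_range_add_finrank_ker HX.mulVecLin
  have h2 : Module.finrank (ZMod 2) (LinearMap.ker HX.mulVecLin)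
      ≤ Module.finrank (ZMod 2) (LinearMap.range (HZ.transpose).mulVecLin) :=
    Submodule.finrank_mono hle
  have h3 : Module.finrank (ZMod 2) (LinearMap.range (HZ.transpose).mulVecLin)
      = HZ.rank := by
    rw [show Module.finrank (ZMod 2) (LinearMap.range (HZ.transpose).mulVecLin)
        = (HZ.transpose).rank from rfl, Matrix.rank_transpose]
  have h4 : Module.finrank (ZMod 2) (LinearMap.range HX.mulVecLin) = HX.rank := rfl
  have h5 : Module.finrank (ZMod 2) (Fin N → ZMod 2) = N := by simp
  rw [h5, h4] at h1
  rw [h3] at h2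
  omega

end Aux

/-- If `K ≥ 1`, the full X-type generator splitting procedure does not
decrease the Z-distance: `d̃_Z ≥ d_Z`. -/
theorem stmt5 (HX : Matrix (Fin nX) (Fin N) (ZMod 2)) (HZ : Matrix (Fin nZ) (Fin N) (ZMod 2))
    (hCSS : HX * HZ.transpose = 0)
    (q : ∀ i : {i : Fin nX // 4 ≤ wt (HX i)}, Fin (wt (HX i.1)) → Fin N)
    (hinj : ∀ i, Function.Injective (q i))
    (hrange : ∀ i p, HX i.1 p ≠ 0 ↔ p ∈ Set.range (q i))
    (hK : 1 ≤ N - HX.rank - HZ.rank) :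
    distZ HX HZ ≤ distZ (splitHX HX q) (splitHZ HX HZ q) := by

  obtain ⟨v0, hv0k, hv0s⟩ := exists_logical HX HZ hK
  have hS : {k | ∃ u : SplitQ HX → ZMod 2, (splitHX HX q).mulVec u = 0 ∧
      u ∉ Submodule.span (ZMod 2) (Set.range (splitHZ HX HZ q)) ∧ wt u = k}.Nonempty := by
    refine ⟨wt (extv HX q v0), extv HX q v0, extv_ker HX q hinj hrange v0 hv0k, ?_, rfl⟩
    intro hmem
    exact hv0s (span_restrict HX q HZ _ hmem)
  have hmem := Nat.sInf_mem hS
  obtain ⟨u, h1, h2, h3⟩ := hmem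
  have hv : u = extv HX q (fun p => u (Sum.inl p)) := by
    funext x
    rcases x with p | ⟨i, m⟩
    · rfl
    · have := cut_determined HX q hinj u h1 i m.val m.isLt
      simpa [extv] using this
  calc distZ HX HZ ≤ wt (fun p => u (Sum.inl p)) := by
        apply Nat.sInf_le
        exact ⟨_, restrict_ker HX q hinj hrange u h1,
          fun hsp => h2 (by rw [hv]; exact span_extend HX q HZ _ hsp), rfl⟩
    _ ≤ wt u := wt_restrict HX u
    _ = distZ (splitHX HX q) (splitHZ HX HZ q) := h3
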